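/- Correctness of Blelloch's parallel scan: let (M, ⊗, e) be a monoid, n ∈ ℕ, T = 2ⁿ, and a : {1, …, T} → M (1-indexed). First perform the up-sweep: u_0 = a and, for d = 0, …, n−1, u_{d+1}(k) = u_d(k − 2^d) ⊗ u_d(k) if 2^{d+1} divides k, else u_{d+1}(k) = u_d(k). Then set w_n(k) = u_n(k) for k < T and w_n(T) = e, and perform the down-sweep: for d = n−1 down to 0, for each k that is a multiple of 2^{d+1} with j = k − 2^d, simultaneously set w_d(j) = w_{d+1}(k) and w_d(k) = w_{d+1}(k) ⊗ w_{d+1}(j), leaving all other positions unchanged. Then w_0(1) = e and w_0(k) = a(1) ⊗ ⋯ ⊗ a(k−1) for 2 ≤ k ≤ T (the exclusive scan), and consequently the final pass values w_0(k) ⊗ a(k) equal the inclusive all-prefix-sums a(1) ⊗ ⋯ ⊗ a(k) for every k. -/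

import Mathlib

/-- `seqProd a s j = a s * a (s+1) * ⋯ * a (s+j)`. -/
def seqProd {M : Type*} [Monoid M] (a : ℕ → M) (s : ℕ) : ℕ → M
  | 0 => a s
  | j + 1 => seqProd a s j * a (s + j + 1)

/-- One level of the up-sweep: position `k` becomes `u (k - 2^d) * u k` if `2^(d+1)`
divides `k`, and is left unchanged otherwise. -/
def upStep {M : Type*} [Monoid M] (d : ℕ) (u : ℕ → M) : ℕ → M :=
  fun k => if 2 ^ (d + 1) ∣ k then u (k - 2 ^ d) * u k else u k

/-- `upIter a d`: the (1-indexed) array after `d` levels of the up-sweep. -/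
def upIter {M : Type*} [Monoid M] (a : ℕ → M) : ℕ → ℕ → M
  | 0 => a
  | d + 1 => upStep d (upIter a d)

/-- Zero the last element: `w_n(k) = u_n(k)` for `k ≠ T` and `w_n(T) = e`. -/
def blInit {M : Type*} [Monoid M] (T : ℕ) (u : ℕ → M) : ℕ → M :=
  fun k => if k = T then 1 else u k

/-- One level of Blelloch's down-sweep: for each `k` that is a multiple of `2^(d+1)`,
with `j = k - 2^d`, simultaneously set `w'(j) = w(k)` and `w'(k) = w(k) * w(j)`,
leaving all other positions unchanged.  Written as a function of the position `p`:
if `2^(d+1) ∣ p + 2^d` (i.e. `p = j`) then `w'(p) = w (p + 2^d)`; else if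
`2^(d+1) ∣ p` (i.e. `p = k`) then `w'(p) = w p * w (p - 2^d)`; else `w'(p) = w p`. -/
def blStep {M : Type*} [Monoid M] (d : ℕ) (w : ℕ → M) : ℕ → M :=
  fun p =>
    if 2 ^ (d + 1) ∣ (p + 2 ^ d) then w (p + 2 ^ d)
    else if 2 ^ (d + 1) ∣ p then w p * w (p - 2 ^ d)
    else w p

/-- The down-sweep, running levels `d = n-1` down to `0` starting from `w`. -/
def blDown {M : Type*} [Monoid M] (n : ℕ) (w : ℕ → M) : ℕ → ℕ → M
  | 0 => w
  | j + 1 => blStep (n - j - 1) (blDown n w j)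

/-- The final array `w_0` of Blelloch's scan on the 1-indexed input `a` of length
`T = 2^n`: up-sweep, zero the last element, then down-sweep through all `n` levels. -/
def blFinal {M : Type*} [Monoid M] (n : ℕ) (a : ℕ → M) : ℕ → M :=
  blDown n (blInit (2 ^ n) (upIter a n)) n


section Aux
variable {M : Type*} [Monoid M] (a : ℕ → M)

/-- Exclusive prefix: `exScan a m = a 1 * ⋯ * a m` (and `1` for `m = 0`). -/
def exScan : ℕ → M
  | 0 => 1
  | m + 1 => seqProd a 1 m

lemma seqProd_merge (s j : ℕ) :
    ∀ i, seqProd a s j * seqProd a (s + j + 1) i = seqProd a s (j + i + 1)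
  | 0 => rfl
  | i + 1 => by
    show seqProd a s j * (seqProd a (s + j + 1) i * a (s + j + 1 + i + 1)) = _
    rw [← mul_assoc, seqProd_merge s j i]
    have h1 : j + (i + 1) + 1 = (j + i + 1) + 1 := by omega
    rw [h1]
    show _ = seqProd a s (j + i + 1) * a (s + (j + i + 1) + 1)
    congr 2
    omega

lemma exScan_merge (m L : ℕ) (hL : 1 ≤ L) :
    exScan a m * seqProd a (m + 1) (L - 1) = exScan a (m + L) := by
  obtain ⟨L, rfl⟩ : ∃ L', L = L' + 1 := ⟨L - 1, by omega⟩
  cases m with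
  | zero => simp [exScan]
  | succ m =>
    show seqProd a 1 m * seqProd a (m + 1 + 1) L = seqProd a 1 (m + 1 + (L + 1) - 1)
    have h2 : m + 1 + (L + 1) - 1 = m + L + 1 := by omega
    have h3 : m + 1 + 1 = 1 + m + 1 := by omega
    rw [h2, h3, seqProd_merge]

lemma upIter_untouched (e k : ℕ) (hk : ¬ 2 ^ (e + 1) ∣ k) :
    ∀ d, e ≤ d → upIter a d k = upIter a e k := by
  intro d
  induction d with
  | zero => intro h; rw [Nat.le_zero.mp h]
  | succ d ih =>
    intro h
    rcases Nat.lt_or_ge e (d + 1) with h' | h'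
    · have hd : e ≤ d := by omega
      show upStep d (upIter a d) k = _
      unfold upStep
      have hnd : ¬ 2 ^ (d + 1) ∣ k := fun hdd => hk (dvd_trans (pow_dvd_pow 2 (by omega)) hdd)
      rw [if_neg hnd, ih hd]
    · have : e = d + 1 := by omega
      subst this; rfl

lemma upIter_eq (d : ℕ) : ∀ k, 1 ≤ k → 2 ^ d ∣ k →
    upIter a d k = seqProd a (k - 2 ^ d + 1) (2 ^ d - 1) := by
  induction d with
  | zero =>
    intro k hk _
    show a k = seqProd a (k - 1 + 1) 0
    have : k - 1 + 1 = k := by omega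
    rw [this]
    rfl
  | succ d ih =>
    intro k hk hdvd
    have hp : 0 < 2 ^ d := Nat.pow_pos (n := d) (by norm_num)
    have hps : (2 : ℕ) ^ (d + 1) = 2 ^ d + 2 ^ d := by rw [pow_succ]; omega
    have hklarge : 2 ^ (d + 1) ≤ k := Nat.le_of_dvd (by omega) hdvd
    have hd1 : 2 ^ d ∣ k := dvd_trans (pow_dvd_pow 2 (by omega)) hdvd
    have hd2 : 2 ^ d ∣ k - 2 ^ d := Nat.dvd_sub hd1 dvd_rfl
    show upStep d (upIter a d) k = _
    unfold upStep
    rw [if_pos hdvd, ih (k - 2 ^ d) (by omega) hd2, ih k (by omega) hd1]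
    have e1 : k - 2 ^ d - 2 ^ d + 1 = k - 2 ^ (d + 1) + 1 := by omega
    have e2 : k - 2 ^ d + 1 = (k - 2 ^ (d + 1) + 1) + (2 ^ d - 1) + 1 := by omega
    rw [e1, e2, seqProd_merge]
    congr 1
    omega

lemma blDown_inv (n : ℕ) : ∀ j, j ≤ n → ∀ p, 1 ≤ p → p ≤ 2 ^ n →
    (2 ^ (n - j) ∣ p →
      blDown n (blInit (2 ^ n) (upIter a n)) j p = exScan a (p - 2 ^ (n - j))) ∧
    (¬ 2 ^ (n - j) ∣ p →
      blDown n (blInit (2 ^ n) (upIter a n)) j p = upIter a n p) := by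
  intro j
  induction j with
  | zero =>
    intro _ p hp1 hp2
    constructor
    · intro hdvd
      have : p = 2 ^ n := le_antisymm hp2 (Nat.le_of_dvd (by omega) hdvd)
      subst this
      show blInit (2 ^ n) (upIter a n) (2 ^ n) = _
      simp [blInit, exScan]
    · intro hnd
      have hne : p ≠ 2 ^ n := fun h => hnd (h ▸ dvd_rfl)
      show blInit (2 ^ n) (upIter a n) p = _
      simp [blInit, hne]
  | succ j ih =>
    intro hj p hp1 hp2
    have hj' : j ≤ n := by omega
    obtain ⟨d, hd⟩ : ∃ d, n - j - 1 = d := ⟨_, rfl⟩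
    have hnj : n - j = d + 1 := by omega
    have hnj1 : n - (j + 1) = d := by omega
    have hp : 0 < 2 ^ d := Nat.pow_pos (n := d) (by norm_num)
    have hps : (2 : ℕ) ^ (d + 1) = 2 ^ d + 2 ^ d := by rw [pow_succ]; omega
    have hdn : 2 ^ (d + 1) ∣ 2 ^ n := pow_dvd_pow 2 (by omega)
    simp only [blDown, hd, hnj1]
    unfold blStep
    by_cases hA : 2 ^ (d + 1) ∣ p + 2 ^ d
    · rw [if_pos hA]
      -- p is the "left child" position
      have hpd : 2 ^ d ∣ p := by
        have h1 : (2:ℕ) ^ d ∣ p + 2 ^ d := dvd_trans (pow_dvd_pow 2 (by omega)) hA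
        have h2 := Nat.dvd_sub h1 (dvd_refl (2 ^ d))
        simpa using h2
      have hle : p + 2 ^ d ≤ 2 ^ n := by
        by_contra hcon
        have hsub : 2 ^ (d + 1) ∣ (p + 2 ^ d - 2 ^ n) := Nat.dvd_sub hA hdn
        have hpos : 0 < p + 2 ^ d - 2 ^ n := by omega
        have := Nat.le_of_dvd hpos hsub
        omega
      have := (ih hj' (p + 2 ^ d) (by omega) hle).1 (by rw [hnj]; exact hA)
      rw [hnj] at this
      rw [this]
      constructor
      · intro _
        congr 1
        omega
      · intro hcon
        exact absurd hpd hcon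
    · rw [if_neg hA]
      by_cases hB : 2 ^ (d + 1) ∣ p
      · rw [if_pos hB]
        -- p is the "right child" position
        have hklarge : 2 ^ (d + 1) ≤ p := Nat.le_of_dvd (by omega) hB
        have h1 := (ih hj' p hp1 hp2).1 (by rw [hnj]; exact hB)
        rw [hnj] at h1
        have hnd2 : ¬ 2 ^ (d + 1) ∣ (p - 2 ^ d) := by
          intro h
          have h2 := Nat.dvd_sub hB h
          have e : p - (p - 2 ^ d) = 2 ^ d := by omega
          rw [e] at h2
          have := Nat.le_of_dvd hp h2
          omega
        have h2 := (ih hj' (p - 2 ^ d) (by omega) (by omega)).2 (by rw [hnj]; exact hnd2)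
        rw [h1, h2, upIter_untouched a d (p - 2 ^ d) hnd2 n (by omega)]
        have hd2 : 2 ^ d ∣ p - 2 ^ d := by
          have : (2:ℕ) ^ d ∣ p := dvd_trans (pow_dvd_pow 2 (by omega)) hB
          exact Nat.dvd_sub this dvd_rfl
        rw [upIter_eq a d (p - 2 ^ d) (by omega) hd2]
        have e1 : p - 2 ^ d - 2 ^ d + 1 = (p - 2 ^ (d + 1)) + 1 := by omega
        rw [e1, exScan_merge a (p - 2 ^ (d+1)) (2 ^ d) (by omega)]
        constructor
        · intro _
          congr 1
          omega
        · intro hcon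
          exact absurd (dvd_trans (pow_dvd_pow 2 (by omega)) hB) hcon
      · rw [if_neg hB]
        -- p untouched at this level
        have hpnd : ¬ 2 ^ d ∣ p := by
          intro h
          obtain ⟨c, hc⟩ := h
          rcases Nat.even_or_odd c with ⟨t, ht⟩ | ⟨t, ht⟩
          · exact hB ⟨t, by rw [hc, ht, pow_succ]; ring⟩
          · exact hA ⟨t + 1, by rw [hc, ht, pow_succ]; ring⟩
        have hpnd1 : ¬ 2 ^ (d + 1) ∣ p := fun h =>
          hpnd (dvd_trans (pow_dvd_pow 2 (by omega)) h)
        have := (ih hj' p hp1 hp2).2 (by rw [hnj]; exact hpnd1)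
        rw [this]
        exact ⟨fun h => absurd h hpnd, fun _ => rfl⟩

end Aux

/-- Correctness of Blelloch's parallel scan on a 1-indexed input of length `T = 2^n`
over a monoid: the final array is the exclusive scan, `w_0(1) = e` and
`w_0(k) = a 1 * ⋯ * a (k-1)` for `2 ≤ k ≤ T`; consequently the final pass values
`w_0(k) * a k` are the inclusive all-prefix-sums `a 1 * ⋯ * a k` for all `1 ≤ k ≤ T`. -/
theorem blelloch_correct {M : Type*} [Monoid M] (n : ℕ) (a : ℕ → M) :
    blFinal n a 1 = 1 ∧
    (∀ k, 2 ≤ k → k ≤ 2 ^ n → blFinal n a k = seqProd a 1 (k - 2)) ∧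
    (∀ k, 1 ≤ k → k ≤ 2 ^ n → blFinal n a k * a k = seqProd a 1 (k - 1)) := by
  have hT : 1 ≤ 2 ^ n := Nat.one_le_two_pow
  have key : ∀ k, 1 ≤ k → k ≤ 2 ^ n → blFinal n a k = exScan a (k - 1) := by
    intro k h1 h2
    have := (blDown_inv a n n le_rfl k h1 h2).1 (by simp)
    simpa [blFinal] using this
  refine ⟨?_, ?_, ?_⟩
  · rw [key 1 le_rfl hT]; rfl
  · intro k h2 hT'
    rw [key k (by omega) hT']
    have : k - 1 = (k - 2) + 1 := by omega
    rw [this]; rfl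
  · intro k h1 hT'
    rw [key k h1 hT']
    rcases Nat.lt_or_ge k 2 with h | h
    · have : k = 1 := by omega
      subst this
      show (1 : M) * a 1 = a 1
      rw [one_mul]
    · have e1 : k - 1 = (k - 2) + 1 := by omega
      rw [e1]
      show seqProd a 1 (k - 2) * a k = seqProd a 1 (k - 2) * a (1 + (k - 2) + 1)
      congr 2
      omega
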